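/- Let {V_i}_{i=1}^m be an (m,l,d)-reconstruction system with analysis operator V such that tr(V*V) = Σ_{i=1}^m tr(V_i*V_i) ≥ d. Then (d/l)·I_l is submajorized by P_q(V); consequently, for every unitarily invariant norm ‖·‖ on M_l(ℂ) with associated symmetric gauge function ψ one has d·η_ψ(l) ≤ ‖P_q(V)‖, and for every increasing convex function f : ℝ_{≥0} → ℝ with f(0) = 0 one has l·f(d/l) ≤ tr(f(P_q(V))). -/

import Mathlib

open Matrix BigOperators
open scoped ComplexOrder

noncomputable section

variable {𝕜 : Type*} [RCLike 𝕜]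

/-- Sum of the `k` largest entries of a vector `x : Fin n → ℝ`,
as the supremum of the sums over subsets of cardinality `k`. -/
noncomputable def kMaxSum {n : ℕ} (x : Fin n → ℝ) (k : ℕ) : ℝ :=
  sSup ((fun t : Finset (Fin n) => ∑ i ∈ t, x i) '' {t : Finset (Fin n) | t.card = k})

/-- `x ≺_w y` : submajorization of real vectors. -/
def SubMajVec {n : ℕ} (x y : Fin n → ℝ) : Prop :=
  ∀ k : ℕ, k ≤ n → kMaxSum x k ≤ kMaxSum y k

/-- `A ≺_w B` : submajorization of self-adjoint matrices (via eigenvalues). -/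
def SubMajMat {n : ℕ} (A B : Matrix (Fin n) (Fin n) 𝕜) : Prop :=
  ∃ (hA : A.IsHermitian) (hB : B.IsHermitian), SubMajVec hA.eigenvalues hB.eigenvalues

/-- `A ≺ B` : majorization of self-adjoint matrices. -/
def MajMat {n : ℕ} (A B : Matrix (Fin n) (Fin n) 𝕜) : Prop :=
  SubMajMat A B ∧ A.trace = B.trace

/-- The q-potential `P_q(V) = Σ_{i,j} |V_i V_j*|²` of a reconstruction system. -/
noncomputable def qPotential {m l d : ℕ} (V : Fin m → Matrix (Fin l) (Fin d) 𝕜) :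
    Matrix (Fin l) (Fin l) 𝕜 :=
  ∑ i, ∑ j, (V i * (V j)ᴴ)ᴴ * (V i * (V j)ᴴ)

/-- `tr |A|² = tr(AᴴA)`, as a real number. -/
noncomputable def traceAbsSq {a b : ℕ} (A : Matrix (Fin a) (Fin b) 𝕜) : ℝ :=
  RCLike.re (Aᴴ * A).trace

/-- `tr |A| = tr((AᴴA)^{1/2})`, the sum of the singular values of `A`. -/
noncomputable def traceAbs {a b : ℕ} (A : Matrix (Fin a) (Fin b) 𝕜) : ℝ :=
  ∑ j, Real.sqrt ((Matrix.posSemidef_conjTranspose_mul_self A).1.eigenvalues j)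

/-- A unitarily invariant norm on `M_n(𝕜)`. -/
structure UINorm (n : ℕ) (𝕜 : Type*) [RCLike 𝕜] where
  N : Matrix (Fin n) (Fin n) 𝕜 → ℝ
  nonneg : ∀ A, 0 ≤ N A
  eq_zero : ∀ A, N A = 0 → A = 0
  triangle : ∀ A B, N (A + B) ≤ N A + N B
  smul_eq : ∀ (c : 𝕜) (A), N (c • A) = ‖c‖ * N A
  invariant : ∀ (A : Matrix (Fin n) (Fin n) 𝕜) (U W : Matrix.unitaryGroup (Fin n) 𝕜),
    N ((U : Matrix (Fin n) (Fin n) 𝕜) * A * (W : Matrix (Fin n) (Fin n) 𝕜)) = N A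

/-- `X ⊕ 0_t` : padding a square matrix with `t` zero rows and columns. -/
noncomputable def padMat {r : ℕ} (t : ℕ) (X : Matrix (Fin r) (Fin r) 𝕜) :
    Matrix (Fin (r + t)) (Fin (r + t)) 𝕜 :=
  Matrix.reindex finSumFinEquiv finSumFinEquiv (Matrix.fromBlocks X 0 0 0)

/-- A compatible unitarily invariant norm: a family of unitarily invariant norms,
one in each dimension, unchanged by adjoining zero rows and columns. -/
structure CUIN (𝕜 : Type*) [RCLike 𝕜] where
  N : ∀ n : ℕ, Matrix (Fin n) (Fin n) 𝕜 → ℝ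
  nonneg : ∀ n A, 0 ≤ N n A
  eq_zero : ∀ n A, N n A = 0 → A = 0
  triangle : ∀ n A B, N n (A + B) ≤ N n A + N n B
  smul_eq : ∀ n (c : 𝕜) (A), N n (c • A) = ‖c‖ * N n A
  invariant : ∀ n (A : Matrix (Fin n) (Fin n) 𝕜) (U W : Matrix.unitaryGroup (Fin n) 𝕜),
    N n ((U : Matrix (Fin n) (Fin n) 𝕜) * A * (W : Matrix (Fin n) (Fin n) 𝕜)) = N n A
  compatible : ∀ (r t : ℕ) (X : Matrix (Fin r) (Fin r) 𝕜), N (r + t) (padMat t X) = N r X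

namespace CUIN

/-- The associated symmetric gauge function, evaluated on a real vector:
`ψ(x) = ‖diag(x)‖`. -/
noncomputable def psi (Φ : CUIN 𝕜) {n : ℕ} (x : Fin n → ℝ) : ℝ :=
  Φ.N n (Matrix.diagonal fun i => (x i : 𝕜))

/-- `η_ψ(l) = ψ(e_l)/l = ‖I_l‖/l`. -/
noncomputable def eta (Φ : CUIN 𝕜) (l : ℕ) : ℝ := Φ.N l 1 / l

/-- A compatible u.i.n. is strict if `‖A‖ = tr(A)·η_ψ(l)` for positive semidefinite `A`
forces `A = (tr A / l)·I`. -/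
def Strict (Φ : CUIN 𝕜) : Prop :=
  ∀ (l : ℕ) (A : Matrix (Fin l) (Fin l) 𝕜), A.PosSemidef →
    Φ.N l A = RCLike.re A.trace * Φ.eta l → A = (A.trace / (l : 𝕜)) • 1

/-- A 2-strongly strict compatible u.i.n.: strict, and on `M_2` any two self-adjoint
matrices `A ≺ B` with equal norms are unitarily equivalent. -/
def TwoStronglyStrict (Φ : CUIN 𝕜) : Prop :=
  Φ.Strict ∧ ∀ A B : Matrix (Fin 2) (Fin 2) 𝕜, A.IsHermitian → B.IsHermitian →
    MajMat A B → Φ.N 2 A = Φ.N 2 B →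
    ∃ U ∈ Matrix.unitaryGroup (Fin 2) 𝕜, A = star U * B * U

end CUIN

/-- Worst-case reconstruction error for `p` lost packets:
`e_p^ψ(V) = max_{|K| = p} ‖V*V − V*E_K V‖ = max_{|K| = p} ‖Σ_{i ∈ K} Vᵢ*Vᵢ‖`. -/
noncomputable def errP {m l d : ℕ} (Φ : CUIN 𝕜) (p : ℕ)
    (V : Fin m → Matrix (Fin l) (Fin d) 𝕜) : ℝ :=
  sSup {r : ℝ | ∃ K : Finset (Fin m), K.card = p ∧ r = Φ.N d (∑ i ∈ K, (V i)ᴴ * V i)}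

/-- The constant `c_{m,l,d} = √( (d/((m−1)·m·l))·(1 − d/(ml)) )`. -/
noncomputable def cmld (m l d : ℕ) : ℝ :=
  Real.sqrt ((d : ℝ) / (((m : ℝ) - 1) * m * l) * (1 - (d : ℝ) / ((m : ℝ) * l)))

/-- A uniformly weighted projective rank-`l` `(m,l,d)`-protocol:
`Σᵢ Vᵢ*Vᵢ = I_d` and `VᵢVᵢ* = (d/(ml))·I_l` for every `i`. -/
def IsUWP {m l d : ℕ} (V : Fin m → Matrix (Fin l) (Fin d) 𝕜) : Prop :=
  (∑ i, (V i)ᴴ * V i = 1) ∧ ∀ i, V i * (V i)ᴴ = ((d : 𝕜) / ((m : 𝕜) * (l : 𝕜))) • 1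

/-- A uniformly weighted projective rank-`l` `(m,l,d)`-protocol, stated via projections:
`Σᵢ Vᵢ*Vᵢ = I_d` and `Vᵢ*Vᵢ = (d/(ml))·Pᵢ` with `Pᵢ` rank-`l` orthogonal projections. -/
def IsUWPProj {m l d : ℕ} (V : Fin m → Matrix (Fin l) (Fin d) 𝕜) : Prop :=
  (∑ i, (V i)ᴴ * V i = 1) ∧ ∀ i, ∃ P : Matrix (Fin d) (Fin d) 𝕜,
    Pᴴ = P ∧ P * P = P ∧ P.rank = l ∧ (V i)ᴴ * V i = ((d : 𝕜) / ((m : 𝕜) * (l : 𝕜))) • P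

/-- Padding a vector with zeros to length `d`. -/
def padVec {l : ℕ} (d : ℕ) (x : Fin l → ℝ) : Fin d → ℝ :=
  fun j => if h : (j : ℕ) < l then x ⟨j, h⟩ else 0

end


-- count of k-subsets containing a fixed element
lemma card_filter_mem_pcard {n k : ℕ} (hk : 1 ≤ k) (i : Fin n) :
    ((Finset.univ.powersetCard k).filter (fun t => i ∈ t)).card = (n - 1).choose (k - 1) := by
  have h1 : ((Finset.univ.powersetCard k).filter (fun t => i ∈ t)).card
      = (((Finset.univ.erase i)).powersetCard (k - 1)).card := by
    refine Finset.card_bij' (fun t _ => t.erase i) (fun s _ => insert i s) ?hi ?hj ?left ?right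
    case hi =>
      intro t ht
      rw [Finset.mem_filter, Finset.mem_powersetCard] at ht
      rw [Finset.mem_powersetCard]
      refine ⟨Finset.erase_subset_erase i ht.1.1, ?_⟩
      rw [Finset.card_erase_of_mem ht.2, ht.1.2]
    case hj =>
      intro s hs
      rw [Finset.mem_powersetCard] at hs
      have his : i ∉ s := fun h => (Finset.mem_erase.1 (hs.1 h)).1 rfl
      rw [Finset.mem_filter, Finset.mem_powersetCard]
      refine ⟨⟨Finset.subset_univ _, ?_⟩, Finset.mem_insert_self i s⟩
      rw [Finset.card_insert_of_notMem his, hs.2]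
      omega
    case left =>
      intro t ht
      rw [Finset.mem_filter] at ht
      exact Finset.insert_erase ht.2
    case right =>
      intro s hs
      rw [Finset.mem_powersetCard] at hs
      have his : i ∉ s := fun h => (Finset.mem_erase.1 (hs.1 h)).1 rfl
      exact Finset.erase_insert his
  rw [h1, Finset.card_powersetCard, Finset.card_erase_of_mem (Finset.mem_univ i),
    Finset.card_univ, Fintype.card_fin]

-- averaging: some k-subset has sum at least (k/n) of the total
lemma exists_subset_card_avg {n : ℕ} (hn : 0 < n) (x : Fin n → ℝ) (k : ℕ) (hk : k ≤ n) :
    ∃ t : Finset (Fin n), t.card = k ∧ (k : ℝ) / n * (∑ i, x i) ≤ ∑ i ∈ t, x i := by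
  rcases Nat.eq_zero_or_pos k with rfl | hk1
  · exact ⟨∅, rfl, by simp⟩
  set P := ((Finset.univ : Finset (Fin n))).powersetCard k with hP
  have hku : k ≤ (Finset.univ : Finset (Fin n)).card := by
    simpa [Finset.card_univ] using hk
  have hPne : P.Nonempty := Finset.powersetCard_nonempty.2 hku
  have hPcard : P.card = n.choose k := by
    rw [hP, Finset.card_powersetCard, Finset.card_univ, Fintype.card_fin]
  have hsum : ∑ t ∈ P, ∑ i ∈ t, x i = ((n - 1).choose (k - 1) : ℝ) * ∑ i, x i := by
    have h2 : ∀ t ∈ P, ∑ i ∈ t, x i = ∑ i : Fin n, if i ∈ t then x i else 0 := by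
      intro t ht
      rw [Finset.sum_ite_mem, Finset.univ_inter]
    rw [Finset.sum_congr rfl h2, Finset.sum_comm, Finset.mul_sum]
    refine Finset.sum_congr rfl fun i _ => ?_
    rw [← Finset.sum_filter, Finset.sum_const, card_filter_mem_pcard hk1 i,
      nsmul_eq_mul]
  have hkey : ∑ _t ∈ P, ((k : ℝ) / n * (∑ i, x i)) ≤ ∑ t ∈ P, ∑ i ∈ t, x i := by
    rw [Finset.sum_const, hsum, hPcard, nsmul_eq_mul]
    have hid : (n.choose k : ℝ) * k = ((n - 1).choose (k - 1) : ℝ) * n := by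
      obtain ⟨a, rfl⟩ : ∃ a, n = a + 1 := ⟨n - 1, by omega⟩
      obtain ⟨b, rfl⟩ : ∃ b, k = b + 1 := ⟨k - 1, by omega⟩
      have := Nat.add_one_mul_choose_eq a b
      push_cast
      have : ((a + 1) * a.choose b : ℝ) = ((a + 1).choose (b + 1) * (b + 1) : ℝ) := by
        exact_mod_cast congrArg (fun z : ℕ => (z : ℝ)) this
      push_cast at this
      linarith
    have hn0 : (n : ℝ) ≠ 0 := by positivity
    refine le_of_eq ?_
    calc (n.choose k : ℝ) * ((k : ℝ) / n * (∑ i, x i))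
        = ((n.choose k : ℝ) * k) / n * (∑ i, x i) := by ring
      _ = ((n - 1).choose (k - 1) : ℝ) * ∑ i, x i := by rw [hid]; field_simp
  obtain ⟨t, ht, hle⟩ := Finset.exists_le_of_sum_le hPne hkey
  exact ⟨t, (Finset.mem_powersetCard.1 ht).2, hle⟩



lemma le_kMaxSum {n : ℕ} (x : Fin n → ℝ) {k : ℕ} (t : Finset (Fin n)) (ht : t.card = k) :
    ∑ i ∈ t, x i ≤ kMaxSum x k :=
  le_csSup (Set.toFinite _).bddAbove ⟨t, ht, rfl⟩

lemma kMaxSum_le {n k : ℕ} (hk : k ≤ n) (x : Fin n → ℝ) (c : ℝ)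
    (h : ∀ t : Finset (Fin n), t.card = k → ∑ i ∈ t, x i ≤ c) : kMaxSum x k ≤ c := by
  apply csSup_le
  · obtain ⟨t, -, htc⟩ := Finset.exists_subset_card_eq
      (show k ≤ (Finset.univ : Finset (Fin n)).card by simpa [Finset.card_univ] using hk)
    exact ⟨∑ i ∈ t, x i, ⟨t, htc, rfl⟩⟩
  · rintro b ⟨t, htc, rfl⟩
    exact h t htc

lemma UINorm.N_zero {n : ℕ} (Ψ : UINorm n ℂ) : Ψ.N 0 = 0 := by
  have := Ψ.smul_eq 0 0
  simpa using this

lemma UINorm.N_sum_le {n : ℕ} (Ψ : UINorm n ℂ) {ι : Type*} (s : Finset ι)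
    (f : ι → Matrix (Fin n) (Fin n) ℂ) : Ψ.N (∑ i ∈ s, f i) ≤ ∑ i ∈ s, Ψ.N (f i) :=
  Finset.le_sum_of_subadditive Ψ.N Ψ.N_zero.le Ψ.triangle s f

lemma UINorm.N_diag_perm {n : ℕ} (Ψ : UINorm n ℂ) (y : Fin n → ℂ) (σ : Equiv.Perm (Fin n)) :
    Ψ.N (Matrix.diagonal (y ∘ σ)) = Ψ.N (Matrix.diagonal y) := by
  set U : Matrix (Fin n) (Fin n) ℂ := (1 : Matrix (Fin n) (Fin n) ℂ).submatrix σ id with hU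
  set W : Matrix (Fin n) (Fin n) ℂ := (1 : Matrix (Fin n) (Fin n) ℂ).submatrix id σ with hW
  have hstarU : star U = W := by
    rw [hU, hW, Matrix.star_eq_conjTranspose, Matrix.conjTranspose_submatrix,
      Matrix.conjTranspose_one]
  have hstarW : star W = U := by
    rw [hU, hW, Matrix.star_eq_conjTranspose, Matrix.conjTranspose_submatrix,
      Matrix.conjTranspose_one]
  have hUW : U * W = 1 := by
    rw [hU, hW, ← Matrix.submatrix_mul _ _ _ id _ Function.bijective_id, one_mul,
      Matrix.submatrix_one_equiv]
  have hWU : W * U = 1 := by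
    rw [hU, hW, ← Matrix.submatrix_mul _ _ _ (⇑σ) _ σ.bijective, one_mul,
      Matrix.submatrix_id_id]
  have hUmem : U ∈ Matrix.unitaryGroup (Fin n) ℂ := by
    rw [Matrix.mem_unitaryGroup_iff, hstarU]; exact hUW
  have hWmem : W ∈ Matrix.unitaryGroup (Fin n) ℂ := by
    rw [Matrix.mem_unitaryGroup_iff, hstarW]; exact hWU
  have hdiag : U * Matrix.diagonal y * W = Matrix.diagonal (y ∘ σ) := by
    have h1 : U * Matrix.diagonal y = (Matrix.diagonal y).submatrix (⇑σ) id := by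
      conv_lhs => rw [← Matrix.submatrix_id_id (Matrix.diagonal y)]
      rw [hU, ← Matrix.submatrix_mul _ _ _ id _ Function.bijective_id, one_mul]
    rw [h1, hW, ← Matrix.submatrix_mul _ _ _ id _ Function.bijective_id, mul_one,
      Matrix.submatrix_diagonal_equiv]
  rw [← hdiag]
  exact Ψ.invariant (Matrix.diagonal y) ⟨U, hUmem⟩ ⟨W, hWmem⟩

lemma diagonal_sum' {n : ℕ} {ι : Type*} (s : Finset ι) (f : ι → (Fin n → ℂ)) :
    ∑ i ∈ s, Matrix.diagonal (f i) = Matrix.diagonal (fun j => ∑ i ∈ s, f i j) := by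
  ext a b
  by_cases hab : a = b
  · subst hab
    simp [Matrix.sum_apply]
  · simp [Matrix.sum_apply, Matrix.diagonal_apply_ne _ hab]

lemma diagonal_const_smul_one {n : ℕ} (c : ℂ) :
    Matrix.diagonal (fun _ : Fin n => c) = c • (1 : Matrix (Fin n) (Fin n) ℂ) := by
  ext a b
  by_cases hab : a = b
  · subst hab
    simp
  · simp [Matrix.diagonal_apply_ne _ hab, Matrix.one_apply_ne hab]

lemma posSemidef_sum {n : ℕ} {ι : Type*} (s : Finset ι) (f : ι → Matrix (Fin n) (Fin n) ℂ)
    (h : ∀ i ∈ s, (f i).PosSemidef) : (∑ i ∈ s, f i).PosSemidef := by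
  induction s using Finset.cons_induction with
  | empty => simpa using Matrix.PosSemidef.zero
  | cons a s ha ih =>
    rw [Finset.sum_cons]
    exact (h a (Finset.mem_cons_self a s)).add (ih fun i hi => h i (Finset.mem_cons.2 (Or.inr hi)))


theorem stmt1 (m l d : ℕ) (hl : 0 < l) (hld : l < d)
    (V : Fin m → Matrix (Fin l) (Fin d) ℂ)
    (hinv : IsUnit (∑ i, (V i)ᴴ * V i))
    (htr : (d : ℝ) ≤ ∑ i, RCLike.re ((V i)ᴴ * V i).trace) :
    SubMajMat (((d : ℂ) / (l : ℂ)) • (1 : Matrix (Fin l) (Fin l) ℂ)) (qPotential V) ∧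
    (∀ Ψ : UINorm l ℂ, (d : ℝ) * (Ψ.N 1 / l) ≤ Ψ.N (qPotential V)) ∧
    (∀ f : ℝ → ℝ, MonotoneOn f (Set.Ici 0) → ConvexOn ℝ (Set.Ici 0) f → f 0 = 0 →
      ∀ hP : (qPotential V).IsHermitian,
        (l : ℝ) * f ((d : ℝ) / l) ≤ ∑ i, f (hP.eigenvalues i)) := by
  classical
  have hd0 : (0:ℝ) < d := by exact_mod_cast hl.trans hld
  have hl0 : (0:ℝ) < l := by exact_mod_cast hl
  set S : Matrix (Fin d) (Fin d) ℂ := ∑ i, (V i)ᴴ * V i with hSdef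
  have hS : Sᴴ = S := by
    rw [hSdef, Matrix.conjTranspose_sum]
    refine Finset.sum_congr rfl fun i _ => ?_
    rw [Matrix.conjTranspose_mul, Matrix.conjTranspose_conjTranspose]
  have htrQ : (qPotential V).trace = (S * S).trace := by
    rw [qPotential, Matrix.trace_sum]
    have step : ∀ i : Fin m, (∑ j, (V i * (V j)ᴴ)ᴴ * (V i * (V j)ᴴ)).trace
        = (S * ((V i)ᴴ * V i)).trace := by
      intro i
      rw [hSdef, Finset.sum_mul, Matrix.trace_sum, Matrix.trace_sum]
      refine Finset.sum_congr rfl fun j _ => ?_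
      have h1 : (V i * (V j)ᴴ)ᴴ * (V i * (V j)ᴴ) = V j * ((V i)ᴴ * V i) * (V j)ᴴ := by
        rw [Matrix.conjTranspose_mul, Matrix.conjTranspose_conjTranspose]
        simp only [Matrix.mul_assoc]
      rw [h1, Matrix.trace_mul_cycle (V j) ((V i)ᴴ * V i) ((V j)ᴴ), Matrix.mul_assoc]
    rw [Finset.sum_congr rfl (fun i _ => step i), ← Matrix.trace_sum, ← Finset.mul_sum, ← hSdef]
  have htrS : (d:ℝ) ≤ RCLike.re S.trace := by
    rw [hSdef, Matrix.trace_sum, map_sum]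
    exact htr
  have hfro : RCLike.re ((Sᴴ * S).trace) = ∑ a : Fin d, ∑ b : Fin d, ‖S b a‖^2 := by
    rw [Matrix.trace, map_sum]
    refine Finset.sum_congr rfl fun a _ => ?_
    rw [Matrix.diag_apply, Matrix.mul_apply, map_sum]
    refine Finset.sum_congr rfl fun b _ => ?_
    rw [Matrix.conjTranspose_apply, RCLike.star_def, RCLike.conj_mul, ← RCLike.ofReal_pow]
    exact RCLike.ofReal_re _
  have hdiagsq : ∑ a : Fin d, (RCLike.re (S a a))^2 ≤ RCLike.re ((Sᴴ * S).trace) := by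
    rw [hfro]
    refine Finset.sum_le_sum fun a _ => ?_
    calc (RCLike.re (S a a))^2 ≤ ‖S a a‖^2 := by
          rw [← sq_abs]
          exact pow_le_pow_left₀ (abs_nonneg _) (RCLike.abs_re_le_norm _) 2
      _ ≤ ∑ b, ‖S b a‖^2 := Finset.single_le_sum (f := fun b => ‖S b a‖^2)
          (fun b _ => by positivity) (Finset.mem_univ a)
  have htraceP : (d:ℝ) ≤ RCLike.re (qPotential V).trace := by
    have h1 : RCLike.re (qPotential V).trace = RCLike.re ((Sᴴ * S).trace) := by rw [htrQ, hS]
    rw [h1]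
    have h2 : ∑ a, RCLike.re (S a a) = RCLike.re S.trace := by
      rw [Matrix.trace, map_sum]; rfl
    have h3 := sq_sum_le_card_mul_sum_sq (s := Finset.univ)
      (f := fun a : Fin d => RCLike.re (S a a))
    have h4 : (d:ℝ) * (d:ℝ) ≤ (∑ a, RCLike.re (S a a))^2 := by
      rw [h2]; nlinarith [htrS, hd0]
    have h5 : (d:ℝ) * (d:ℝ) ≤ (d:ℝ) * ∑ a, (RCLike.re (S a a))^2 := by
      refine h4.trans ?_
      simpa [Finset.card_univ] using h3
    have h6 : (d:ℝ) ≤ ∑ a, (RCLike.re (S a a))^2 := le_of_mul_le_mul_left h5 hd0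
    linarith [hdiagsq]
  have hPsd : (qPotential V).PosSemidef := by
    rw [qPotential]
    exact posSemidef_sum _ _ fun i _ => posSemidef_sum _ _ fun j _ =>
      Matrix.posSemidef_conjTranspose_mul_self _
  have hPh : (qPotential V).IsHermitian := hPsd.1
  have heignn : ∀ i, 0 ≤ hPh.eigenvalues i := fun i => hPsd.eigenvalues_nonneg i
  have heigsum : RCLike.re (qPotential V).trace = ∑ i, hPh.eigenvalues i := by
    have hu : star (hPh.eigenvectorUnitary : Matrix (Fin l) (Fin l) ℂ) *
        (hPh.eigenvectorUnitary : Matrix (Fin l) (Fin l) ℂ) = 1 :=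
      (Unitary.mem_iff.mp hPh.eigenvectorUnitary.2).1
    have h1 : (qPotential V).trace = ∑ i, ((hPh.eigenvalues i : ℝ) : ℂ) := by
      conv_lhs => rw [hPh.spectral_theorem]
      rw [Unitary.conjStarAlgAut_apply, Matrix.trace_mul_cycle, hu, one_mul, Matrix.trace_diagonal]
      rfl
    rw [h1, map_sum]
    simp
  have hT : (d:ℝ) ≤ ∑ i, hPh.eigenvalues i := heigsum ▸ htraceP
  have hc : ((d:ℂ)/(l:ℂ)) = (((d:ℝ)/(l:ℝ) : ℝ) : ℂ) := by push_cast; ring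
  have hcA : (((d:ℂ)/(l:ℂ)) • (1 : Matrix (Fin l) (Fin l) ℂ)).IsHermitian := by
    show _ᴴ = _
    rw [Matrix.conjTranspose_smul, Matrix.conjTranspose_one]
    congr 1
    rw [hc]
    exact Complex.conj_ofReal _
  have heigA : ∀ i, hcA.eigenvalues i = (d:ℝ)/(l:ℝ) := by
    intro i
    have hu2 : star (hcA.eigenvectorUnitary : Matrix (Fin l) (Fin l) ℂ) *
        (hcA.eigenvectorUnitary : Matrix (Fin l) (Fin l) ℂ) = 1 :=
      (Unitary.mem_iff.mp hcA.eigenvectorUnitary.2).1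
    have hD : Matrix.diagonal (RCLike.ofReal ∘ hcA.eigenvalues)
        = ((d:ℂ)/(l:ℂ)) • (1 : Matrix (Fin l) (Fin l) ℂ) := by
      have h := hcA.spectral_theorem
      have h2 := congrArg (fun M => star (hcA.eigenvectorUnitary : Matrix (Fin l) (Fin l) ℂ) *
        M * (hcA.eigenvectorUnitary : Matrix (Fin l) (Fin l) ℂ)) h
      rw [Unitary.conjStarAlgAut_apply] at h2
      rw [Matrix.mul_smul, mul_one, Matrix.smul_mul, hu2] at h2
      rw [← Matrix.mul_assoc, ← Matrix.mul_assoc, hu2, one_mul, Matrix.mul_assoc, hu2,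
        mul_one] at h2
      exact h2.symm
    have h3 := congrArg (fun M => M i i) hD
    simp only [Matrix.diagonal_apply_eq, Matrix.smul_apply, Matrix.one_apply_eq,
      smul_eq_mul, mul_one, Function.comp_apply] at h3
    refine RCLike.ofReal_injective (K := ℂ) ?_
    rw [h3, hc]
    rfl
  have hmaj : SubMajVec hcA.eigenvalues hPh.eigenvalues := by
    intro k hk
    have hup : kMaxSum hcA.eigenvalues k ≤ (k:ℝ) * ((d:ℝ)/l) := by
      apply kMaxSum_le hk
      intro t ht
      rw [Finset.sum_congr rfl (fun i _ => heigA i), Finset.sum_const, ht, nsmul_eq_mul]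
    obtain ⟨t, htc, havg⟩ := exists_subset_card_avg hl hPh.eigenvalues k hk
    refine hup.trans (le_trans (le_trans ?_ havg) (le_kMaxSum _ t htc))
    calc (k:ℝ) * ((d:ℝ)/l) = (k:ℝ)/l * d := by ring
      _ ≤ (k:ℝ)/l * ∑ i, hPh.eigenvalues i :=
          mul_le_mul_of_nonneg_left hT (by positivity)
  refine ⟨⟨hcA, hPh, hmaj⟩, ?_, ?_⟩
  · intro Ψ
    set y : Fin l → ℂ := RCLike.ofReal ∘ hPh.eigenvalues with hy
    have hNP : Ψ.N (qPotential V) = Ψ.N (Matrix.diagonal y) := by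
      conv_lhs => rw [hPh.spectral_theorem, Unitary.conjStarAlgAut_apply]
      exact Ψ.invariant (Matrix.diagonal y) hPh.eigenvectorUnitary
        ⟨star (hPh.eigenvectorUnitary : Matrix (Fin l) (Fin l) ℂ),
          Unitary.star_mem hPh.eigenvectorUnitary.2⟩
    haveI : NeZero l := ⟨hl.ne'⟩
    have hsum2 : ∑ t : Fin l, Matrix.diagonal (y ∘ (Equiv.addLeft t))
        = ((∑ i, hPh.eigenvalues i : ℝ) : ℂ) • (1 : Matrix (Fin l) (Fin l) ℂ) := by
      rw [diagonal_sum']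
      have h9 : (fun j => ∑ t : Fin l, (y ∘ (Equiv.addLeft t)) j)
          = fun _ => ((∑ i, hPh.eigenvalues i : ℝ) : ℂ) := by
        funext j
        have := Fintype.sum_equiv (Equiv.addRight j) (fun t : Fin l => y (t + j)) y
          (fun t => rfl)
        calc ∑ t : Fin l, (y ∘ (Equiv.addLeft t)) j = ∑ t : Fin l, y (t + j) := rfl
          _ = ∑ i, y i := this
          _ = ((∑ i, hPh.eigenvalues i : ℝ) : ℂ) := by rw [hy]; push_cast; rfl
      rw [h9, diagonal_const_smul_one]
    have htri : ((∑ i, hPh.eigenvalues i : ℝ)) * Ψ.N 1 ≤ (l:ℝ) * Ψ.N (Matrix.diagonal y) := by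
      have h10 : Ψ.N (((∑ i, hPh.eigenvalues i : ℝ) : ℂ) • (1 : Matrix (Fin l) (Fin l) ℂ))
          = ((∑ i, hPh.eigenvalues i : ℝ)) * Ψ.N 1 := by
        rw [Ψ.smul_eq]
        congr 1
        rw [Complex.norm_real]
        exact Real.norm_of_nonneg (Finset.sum_nonneg fun i _ => heignn i)
      calc ((∑ i, hPh.eigenvalues i : ℝ)) * Ψ.N 1
          = Ψ.N (∑ t : Fin l, Matrix.diagonal (y ∘ (Equiv.addLeft t))) := by rw [hsum2, h10]
        _ ≤ ∑ t : Fin l, Ψ.N (Matrix.diagonal (y ∘ (Equiv.addLeft t))) := Ψ.N_sum_le _ _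
        _ = ∑ _t : Fin l, Ψ.N (Matrix.diagonal y) :=
            Finset.sum_congr rfl fun t _ => Ψ.N_diag_perm y _
        _ = (l:ℝ) * Ψ.N (Matrix.diagonal y) := by
            rw [Finset.sum_const, Finset.card_univ, Fintype.card_fin, nsmul_eq_mul]
    have hd1 : (d:ℝ) * Ψ.N 1 ≤ ((∑ i, hPh.eigenvalues i : ℝ)) * Ψ.N 1 :=
      mul_le_mul_of_nonneg_right hT (Ψ.nonneg 1)
    rw [hNP]
    rw [mul_div_assoc']
    rw [div_le_iff₀ hl0]
    calc (d:ℝ) * Ψ.N 1 ≤ ((∑ i, hPh.eigenvalues i : ℝ)) * Ψ.N 1 := hd1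
      _ ≤ (l:ℝ) * Ψ.N (Matrix.diagonal y) := htri
      _ = Ψ.N (Matrix.diagonal y) * (l:ℝ) := mul_comm _ _
  · intro f hmono hconv hf0 hP'
    have heq : hP'.eigenvalues = hPh.eigenvalues := rfl
    rw [heq]
    have hjensen := hconv.map_sum_le (t := Finset.univ) (w := fun _ : Fin l => 1/(l:ℝ))
      (p := hPh.eigenvalues) (fun i _ => by positivity)
      (by rw [Finset.sum_const, Finset.card_univ, Fintype.card_fin, nsmul_eq_mul]; field_simp)
      (fun i _ => heignn i)
    have hmean : (∑ i, (1/(l:ℝ)) • hPh.eigenvalues i) = (∑ i, hPh.eigenvalues i)/l := by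
      simp only [smul_eq_mul, ← Finset.mul_sum]
      ring
    rw [hmean] at hjensen
    have hsnn : (0:ℝ) ≤ ∑ i, hPh.eigenvalues i := Finset.sum_nonneg fun i _ => heignn i
    have h8 : f ((d:ℝ)/l) ≤ f ((∑ i, hPh.eigenvalues i)/l) := by
      apply hmono (Set.mem_Ici.2 (by positivity)) (Set.mem_Ici.2 (by positivity))
      gcongr
    calc (l:ℝ) * f ((d:ℝ)/l) ≤ (l:ℝ) * f ((∑ i, hPh.eigenvalues i)/l) :=
          mul_le_mul_of_nonneg_left h8 hl0.le
      _ ≤ (l:ℝ) * ∑ i, (1/(l:ℝ)) • f (hPh.eigenvalues i) :=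
          mul_le_mul_of_nonneg_left hjensen hl0.le
      _ = ∑ i, f (hPh.eigenvalues i) := by
          simp only [smul_eq_mul, ← Finset.mul_sum]
          field_simp
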